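/- Let H be a real Hilbert space and let C_1, …, C_m ⊆ H be half-spaces (sets of the form {x : ⟨a_i, x⟩ ≤ β_i} with a_i ≠ 0) with nonempty intersection C. Then the family {C_1, …, C_m} is boundedly regular: for every bounded sequence {x_k} ⊆ H, if max_i d(x_k, C_i) → 0 then d(x_k, C) → 0. -/

import Mathlib

open Metric Filter

theorem stmt19 {H : Type*} [NormedAddCommGroup H] [InnerProductSpace ℝ H]
    {m : ℕ} (hm : 0 < m) (a : Fin m → H) (ha : ∀ i, a i ≠ 0) (β : Fin m → ℝ)
    (C : Fin m → Set H) (hC : ∀ i, C i = {x : H | inner ℝ (a i) x ≤ β i})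
    (hne : (⋂ i, C i).Nonempty)
    (x : ℕ → H) (hb : Bornology.IsBounded (Set.range x))
    (hmax : Filter.Tendsto
      (fun k => Finset.univ.sup' ⟨⟨0, hm⟩, Finset.mem_univ _⟩
        (fun i => Metric.infDist (x k) (C i)))
      Filter.atTop (nhds 0)) :
    Filter.Tendsto (fun k => Metric.infDist (x k) (⋂ i, C i))
      Filter.atTop (nhds 0) := by
  classical
  set V : Submodule ℝ H := Submodule.span ℝ (Set.range a) with hV
  have hfd : FiniteDimensional ℝ V :=
    FiniteDimensional.span_of_finite ℝ (Set.finite_range a)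
  have haV : ∀ i, (a i : H) ∈ V := fun i => Submodule.subset_span ⟨i, rfl⟩
  set P := V.orthogonalProjectionOnto with hP
  -- distances to each C i tend to 0
  have hCine : ∀ i, (C i).Nonempty := fun i => hne.mono (Set.iInter_subset _ i)
  have hsupge : ∀ i k, infDist (x k) (C i) ≤
      Finset.univ.sup' ⟨⟨0, hm⟩, Finset.mem_univ _⟩ (fun i => infDist (x k) (C i)) :=
    fun i k => Finset.le_sup' (fun i => infDist (x k) (C i)) (Finset.mem_univ i)
  have hdist : ∀ i, Tendsto (fun k => infDist (x k) (C i)) atTop (nhds 0) := by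
    intro i
    refine squeeze_zero (fun k => infDist_nonneg) (fun k => hsupge i k) hmax
  -- key inequality
  have hkey : ∀ i (z : H), (inner ℝ (a i) z : ℝ) ≤ β i + ‖a i‖ * infDist z (C i) := by
    intro i z
    have h1 : (inner ℝ (a i) z - β i) / ‖a i‖ ≤ infDist z (C i) := by
      rw [← not_lt, infDist_lt_iff (hCine i)]
      push_neg
      intro c hc
      rw [hC i] at hc
      have h2 : (inner ℝ (a i) z : ℝ) - β i ≤ ‖a i‖ * dist z c := by
        have : (inner ℝ (a i) z : ℝ) - inner ℝ (a i) c = inner ℝ (a i) (z - c) := by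
          rw [inner_sub_right]
        have hc' : (inner ℝ (a i) c : ℝ) ≤ β i := hc
        calc (inner ℝ (a i) z : ℝ) - β i ≤ inner ℝ (a i) z - inner ℝ (a i) c := by
              linarith [hc']
          _ = inner ℝ (a i) (z - c) := this
          _ ≤ ‖a i‖ * ‖z - c‖ := real_inner_le_norm _ _
          _ = ‖a i‖ * dist z c := by rw [dist_eq_norm]
      rw [div_le_iff₀ (norm_pos_iff.mpr (ha i))] at *
      linarith [h2]
    have hpos : (0:ℝ) < ‖a i‖ := norm_pos_iff.mpr (ha i)
    rw [div_le_iff₀ hpos] at h1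
    linarith
  -- bound on sequence
  obtain ⟨M, hM⟩ : ∃ M, ∀ k, ‖x k‖ ≤ M := by
    obtain ⟨M, hM⟩ := hb.exists_norm_le
    exact ⟨M, fun k => hM _ ⟨k, rfl⟩⟩
  have hMnn : (0:ℝ) ≤ M := le_trans (norm_nonneg _) (hM 0)
  -- projections
  set q : ℕ → V := fun k => P (x k) with hq
  have hqb : ∀ k, (q k : V) ∈ Metric.closedBall (0:V) M := by
    intro k
    simp only [Metric.mem_closedBall, dist_zero_right]
    calc ‖q k‖ ≤ ‖x k‖ := by
          exact (V.orthogonalProjectionOnto.le_of_opNorm_le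
            (Submodule.orthogonalProjectionOnto_norm_le V) (x k)).trans_eq (one_mul _)
      _ ≤ M := hM k
  have hinnerq : ∀ i k, (inner ℝ (a i) ((q k : H)) : ℝ) = inner ℝ (a i) (x k) := by
    intro i k
    have h0 : (inner ℝ (a i) (x k - (q k : H)) : ℝ) = 0 :=
      (Submodule.mem_orthogonal V _).mp (Submodule.sub_starProjection_mem_orthogonal (K := V) (x k)) _ (haV i)
    rw [inner_sub_right] at h0
    linarith
  apply tendsto_of_subseq_tendsto
  intro ns hns
  obtain ⟨y, hyball, φ, hφ, hφlim⟩ :=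
    (isCompact_closedBall (0:V) M).tendsto_subseq (x := fun k => q (ns k)) (fun k => hqb (ns k))
  refine ⟨φ, ?_⟩
  have hnsφ : Tendsto (fun k => ns (φ k)) atTop atTop := hns.comp hφ.tendsto_atTop
  -- coe limit in H
  have hcoelim : Tendsto (fun k => ((q (ns (φ k)) : H))) atTop (nhds (y : H)) :=
    ((continuous_subtype_val).tendsto y).comp hφlim
  -- y ∈ ⋂ C i
  have hyC : (y : H) ∈ ⋂ i, C i := by
    rw [Set.mem_iInter]
    intro i
    rw [hC i]
    have hinlim : Tendsto (fun k => (inner ℝ (a i) ((q (ns (φ k)) : H)) : ℝ)) atTop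
        (nhds (inner ℝ (a i) (y : H))) :=
      ((continuous_const.inner continuous_id).tendsto _).comp hcoelim
    have hblim : Tendsto (fun k => β i + ‖a i‖ * infDist (x (ns (φ k))) (C i)) atTop
        (nhds (β i)) := by
      have := ((hdist i).comp hnsφ).const_mul (‖a i‖)
      have h2 := this.const_add (β i)
      simpa using h2
    refine le_of_tendsto_of_tendsto hinlim hblim (Filter.Eventually.of_forall fun k => ?_)
    simp only []
    rw [hinnerq]
    exact hkey i (x (ns (φ k)))
  -- squeeze
  refine squeeze_zero (fun k => infDist_nonneg) (g := fun k => ‖(q (ns (φ k)) : H) - (y : H)‖)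
    (fun k => ?_) ?_
  · set j := ns (φ k)
    have hz : (y : H) + (x j - (q j : H)) ∈ ⋂ i, C i := by
      rw [Set.mem_iInter]
      intro i
      rw [hC i]
      have h0 : (inner ℝ (a i) (x j - (q j : H)) : ℝ) = 0 :=
        (Submodule.mem_orthogonal V _).mp (Submodule.sub_starProjection_mem_orthogonal (K := V) (x j)) _ (haV i)
      have hy : (inner ℝ (a i) (y : H) : ℝ) ≤ β i := by
        have := Set.mem_iInter.mp hyC i
        rwa [hC i] at this
      simp only [Set.mem_setOf_eq, inner_add_right, h0]
      linarith
    calc infDist (x j) (⋂ i, C i) ≤ dist (x j) ((y : H) + (x j - (q j : H))) :=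
          infDist_le_dist_of_mem hz
      _ = ‖(q j : H) - (y : H)‖ := by
          rw [dist_eq_norm, show x j - ((y : H) + (x j - (q j : H))) = (q j : H) - (y : H) by abel]
  · have : Tendsto (fun k => (q (ns (φ k)) : H) - (y : H)) atTop (nhds 0) :=
      tendsto_sub_nhds_zero_iff.mpr hcoelim
    simpa using this.norm
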